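/- Let b>0, σ>0 satisfy σ² ≤ 2b, let T>0, x₀>0, and let n be a positive integer with n > 2T. On a probability space let q₁,…,qₙ be i.i.d. random variables with P(q_k = √(T/n)) = P(q_k = −√(T/n)) = 1/2, and define the additive scheme X₀⁽ⁿ⁾ = x₀, X_k⁽ⁿ⁾ = X_{k−1}⁽ⁿ⁾ + (b − X_{k−1}⁽ⁿ⁾)T/n + σ q_k √(X_{k−1}⁽ⁿ⁾). Set γ = max( x₀, (2/3)(σ² + 2b + √(σ⁴ + 4bσ² + 8b²)) ). Then for all 0 ≤ k ≤ n, E[(X_k⁽ⁿ⁾)²] ≤ γ² and E[X_k⁽ⁿ⁾] ≤ γ; in particular this bound is uniform in n and k. -/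

import Mathlib

open MeasureTheory ProbabilityTheory

/-- The deterministic recursion defining the CIR Euler scheme as a function of the noise. -/
noncomputable def cirF (b σ T : ℝ) (n : ℕ) (x₀ : ℝ) : ℕ → (ℕ → ℝ) → ℝ
  | 0, _ => x₀
  | m + 1, v =>
      cirF b σ T n x₀ m v + (b - cirF b σ T n x₀ m v) * T / (n : ℝ)
        + σ * v (m + 1) * Real.sqrt (cirF b σ T n x₀ m v)

lemma cirF_measurable (b σ T : ℝ) (n : ℕ) (x₀ : ℝ) (m : ℕ) :
    Measurable (cirF b σ T n x₀ m) := by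
  induction m with
  | zero => exact measurable_const
  | succ m ih =>
    show Measurable fun v => cirF b σ T n x₀ m v + (b - cirF b σ T n x₀ m v) * T / (n : ℝ)
        + σ * v (m + 1) * Real.sqrt (cirF b σ T n x₀ m v)
    exact (ih.add (((measurable_const.sub ih).mul_const T).div_const _)).add
      ((measurable_const.mul (measurable_pi_apply _)).mul
        (Real.continuous_sqrt.measurable.comp ih))

lemma cirF_congr (b σ T : ℝ) (n : ℕ) (x₀ : ℝ) (m : ℕ) {v w : ℕ → ℝ}
    (h : ∀ j, 1 ≤ j → j ≤ m → v j = w j) :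
    cirF b σ T n x₀ m v = cirF b σ T n x₀ m w := by
  induction m with
  | zero => rfl
  | succ m ih =>
    have hih := ih (fun j h1 h2 => h j h1 (h2.trans (Nat.le_succ m)))
    show cirF b σ T n x₀ m v + (b - cirF b σ T n x₀ m v) * T / (n : ℝ)
        + σ * v (m + 1) * Real.sqrt (cirF b σ T n x₀ m v)
      = cirF b σ T n x₀ m w + (b - cirF b σ T n x₀ m w) * T / (n : ℝ)
        + σ * w (m + 1) * Real.sqrt (cirF b σ T n x₀ m w)
    rw [hih, h (m + 1) (by omega) le_rfl]

lemma cir_indep_aux {Ω : Type*} [MeasurableSpace Ω] (μ : Measure Ω)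
    (b σ T x₀ : ℝ) (n : ℕ) (q : ℕ → Ω → ℝ) (hmeas : ∀ k, Measurable (q k))
    (hindep : iIndepFun (fun i : Fin n => q (i + 1)) μ)
    (k : ℕ) (hk : k < n) :
    IndepFun (q (k + 1)) (fun ω => cirF b σ T n x₀ k (fun m => q m ω)) μ := by
  classical
  set Tset : Finset (Fin n) := Finset.univ.filter (fun i => (i : ℕ) < k) with hTset
  have hdisj : Disjoint ({(⟨k, hk⟩ : Fin n)} : Finset (Fin n)) Tset := by
    rw [Finset.disjoint_singleton_left]
    simp [hTset]
  have hfin := hindep.indepFun_finset {(⟨k, hk⟩ : Fin n)} Tset hdisj (fun i => hmeas _)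
  set g : ({x // x ∈ Tset} → ℝ) → ℝ := fun u =>
    cirF b σ T n x₀ k (fun m =>
      if h : 1 ≤ m ∧ m ≤ k then
        u ⟨⟨m - 1, by omega⟩, by
          simp only [hTset, Finset.mem_filter, Finset.mem_univ, true_and]
          show m - 1 < k
          omega⟩
      else 0) with hg
  have hgm : Measurable g := by
    apply (cirF_measurable b σ T n x₀ k).comp
    apply measurable_pi_lambda
    intro m
    by_cases h : 1 ≤ m ∧ m ≤ k
    · simp only [dif_pos h]
      exact measurable_pi_apply _
    · simp only [dif_neg h]
      exact measurable_const
  have hφm : Measurable (fun u : ({x // x ∈ ({(⟨k, hk⟩ : Fin n)} : Finset (Fin n))} → ℝ) =>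
      u ⟨⟨k, hk⟩, Finset.mem_singleton_self _⟩) := measurable_pi_apply _
  have h3 := hfin.comp hφm hgm
  have e2 : (g ∘ fun a (i : {x // x ∈ Tset}) => q ((i : Fin n) + 1) a)
      = fun ω => cirF b σ T n x₀ k (fun m => q m ω) := by
    funext ω
    simp only [Function.comp_apply, hg]
    apply cirF_congr
    intro m h1 h2
    rw [dif_pos ⟨h1, h2⟩]
    have : m - 1 + 1 = m := by omega
    rw [this]
  rw [e2] at h3
  exact h3

set_option maxHeartbeats 2000000

/-- Uniform moment bounds for the additive Euler scheme of the CIR process: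
with `γ = max(x₀, (2/3)(σ² + 2b + √(σ⁴ + 4bσ² + 8b²)))`, one has `E[(X_k)²] ≤ γ²` and
`E[X_k] ≤ γ` for all `0 ≤ k ≤ n`, uniformly in `n` and `k`. -/
theorem cir_euler_second_moment_bound {Ω : Type*} [MeasurableSpace Ω]
    (μ : Measure Ω) [IsProbabilityMeasure μ]
    (b σ T x₀ : ℝ) (n : ℕ)
    (hb : 0 < b) (hσ : 0 < σ) (hσ2 : σ ^ 2 ≤ 2 * b)
    (hT : 0 < T) (hx₀ : 0 < x₀) (hn : 0 < n) (hnT : 2 * T < (n : ℝ))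
    (q : ℕ → Ω → ℝ) (hmeas : ∀ k, Measurable (q k))
    (hindep : iIndepFun (fun i : Fin n => q (i + 1)) μ)
    (hdist : ∀ k, 1 ≤ k → k ≤ n →
      μ {ω | q k ω = Real.sqrt (T / n)} = 1 / 2 ∧
        μ {ω | q k ω = -Real.sqrt (T / n)} = 1 / 2)
    (X : ℕ → Ω → ℝ) (hX0 : ∀ ω, X 0 ω = x₀)
    (hXrec : ∀ k, 1 ≤ k → k ≤ n → ∀ ω,
      X k ω = X (k - 1) ω + (b - X (k - 1) ω) * T / n
        + σ * q k ω * Real.sqrt (X (k - 1) ω)) :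
    ∀ k ≤ n,
      (∫ ω, (X k ω) ^ 2 ∂μ)
          ≤ (max x₀ (2 / 3 * (σ ^ 2 + 2 * b + Real.sqrt (σ ^ 4 + 4 * b * σ ^ 2 + 8 * b ^ 2)))) ^ 2 ∧
      (∫ ω, X k ω ∂μ)
          ≤ max x₀ (2 / 3 * (σ ^ 2 + 2 * b + Real.sqrt (σ ^ 4 + 4 * b * σ ^ 2 + 8 * b ^ 2))) := by
  -- Notation
  set γ := max x₀ (2 / 3 * (σ ^ 2 + 2 * b + Real.sqrt (σ ^ 4 + 4 * b * σ ^ 2 + 8 * b ^ 2)))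
    with hγdef
  set s := Real.sqrt (T / n) with hsdef
  have hn' : (0 : ℝ) < n := by exact_mod_cast hn
  have hα : 0 < T / (n : ℝ) := div_pos hT hn'
  have hα2 : T / (n : ℝ) < 1 / 2 := by
    rw [div_lt_iff₀ hn']
    linarith
  have hs0 : 0 < s := Real.sqrt_pos.2 hα
  have hs2 : s ^ 2 = T / (n : ℝ) := Real.sq_sqrt hα.le
  -- facts about γ
  have hr0 : 0 ≤ Real.sqrt (σ ^ 4 + 4 * b * σ ^ 2 + 8 * b ^ 2) := Real.sqrt_nonneg _
  have hr2 : (Real.sqrt (σ ^ 4 + 4 * b * σ ^ 2 + 8 * b ^ 2)) ^ 2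
      = σ ^ 4 + 4 * b * σ ^ 2 + 8 * b ^ 2 := Real.sq_sqrt (by positivity)
  have hγx : x₀ ≤ γ := le_max_left _ _
  have hγ0 : 0 < γ := lt_of_lt_of_le hx₀ hγx
  have hrb : 2 * b ≤ Real.sqrt (σ ^ 4 + 4 * b * σ ^ 2 + 8 * b ^ 2) := by
    nlinarith [hr2, hr0, hb, sq_nonneg σ, sq_nonneg (σ ^ 2), mul_pos hσ hσ]
  have hbγ : b ≤ γ := by
    have : b ≤ 2 / 3 * (σ ^ 2 + 2 * b + Real.sqrt (σ ^ 4 + 4 * b * σ ^ 2 + 8 * b ^ 2)) := by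
      nlinarith [hr0, sq_nonneg σ, hb]
    exact this.trans (le_max_right _ _)
  have key3 : 0 ≤ 3 * γ ^ 2 - 2 * (b + σ ^ 2) * γ - b ^ 2 := by
    set r := Real.sqrt (σ ^ 4 + 4 * b * σ ^ 2 + 8 * b ^ 2) with hrdef
    set g₀ := 2 / 3 * (σ ^ 2 + 2 * b + r) with hg₀def
    have hg₀ : 0 ≤ 3 * g₀ ^ 2 - 2 * (b + σ ^ 2) * g₀ - b ^ 2 := by
      nlinarith [hrb, hb, sq_nonneg σ, hr0, sq_nonneg (σ ^ 2), mul_pos hb hb]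
    have hγg : g₀ ≤ γ := le_max_right _ _
    have hg₀pos : 0 ≤ 3 * (γ + g₀) - 2 * (b + σ ^ 2) := by
      nlinarith [hrb, hb, sq_nonneg σ, hr0, hγ0]
    linarith [hg₀, mul_nonneg (sub_nonneg.2 hγg) hg₀pos]
  -- auxiliary: sqrt x ≤ 1 + x
  have hsqrt_le : ∀ x : ℝ, 0 ≤ x → Real.sqrt x ≤ 1 + x := by
    intro x hx
    nlinarith [Real.sq_sqrt hx, Real.sqrt_nonneg x, sq_nonneg (Real.sqrt x - 1)]
  -- pointwise key estimate for one step
  have key : ∀ (M x qq : ℝ), 0 < x → x ≤ M → (qq = s ∨ qq = -s) →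
      0 < x + (b - x) * T / (n : ℝ) + σ * qq * Real.sqrt x ∧
        x + (b - x) * T / (n : ℝ) + σ * qq * Real.sqrt x ≤ M + b + σ * s * (1 + M) := by
    intro M x qq hx hxM hqq
    have hu0 : 0 ≤ Real.sqrt x := Real.sqrt_nonneg x
    have hu2 : (Real.sqrt x) ^ 2 = x := Real.sq_sqrt hx.le
    have hu1x : Real.sqrt x ≤ 1 + x := hsqrt_le x hx.le
    have hlow : σ * qq * Real.sqrt x ≥ -(σ * s * Real.sqrt x) := by
      rcases hqq with h | h <;> rw [h] <;> nlinarith [mul_nonneg (mul_nonneg hσ.le hs0.le) hu0]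
    have hhigh : σ * qq * Real.sqrt x ≤ σ * s * Real.sqrt x := by
      rcases hqq with h | h <;> rw [h] <;> nlinarith [mul_nonneg (mul_nonneg hσ.le hs0.le) hu0]
    constructor
    · rw [mul_div_assoc]
      have hpos : 0 < x + (b - x) * (T / (n : ℝ)) - σ * s * Real.sqrt x := by
        by_contra hcon
        push_neg at hcon
        have hc2 : (0 : ℝ) < 1 - T / (n : ℝ) := by linarith
        have h1 : (1 - T / (n : ℝ)) * (x + (b - x) * (T / (n : ℝ)) - σ * s * Real.sqrt x) ≤ 0 :=
          mul_nonpos_of_nonneg_of_nonpos hc2.le hcon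
        have hσs : σ ^ 2 * s ^ 2 = σ ^ 2 * (T / (n : ℝ)) := by rw [hs2]
        have hu2c : (1 - T / (n : ℝ)) ^ 2 * (Real.sqrt x) ^ 2
            = (1 - T / (n : ℝ)) ^ 2 * x := by rw [hu2]
        have hff : 0 < (T / (n : ℝ)) * (4 * (1 - T / (n : ℝ)) * b - σ ^ 2) :=
          mul_pos hα (by nlinarith [hb, hα2, hσ2])
        nlinarith [h1, sq_nonneg (2 * (1 - T / (n : ℝ)) * Real.sqrt x - σ * s), hσs, hff, hu2c]
      linarith
    · rw [mul_div_assoc]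
      have h1 : σ * s * Real.sqrt x ≤ σ * s * (1 + M) := by
        apply mul_le_mul_of_nonneg_left _ (mul_nonneg hσ.le hs0.le)
        linarith
      linarith [h1, hhigh, mul_pos hx hα,
        mul_pos hb (show (0:ℝ) < 1 / 2 - T / (n : ℝ) by linarith), hxM]
  -- measurability and representation
  have hrep : ∀ m, m ≤ n → ∀ ω, X m ω = cirF b σ T n x₀ m (fun j => q j ω) := by
    intro m
    induction m with
    | zero => intro _ ω; rw [hX0]; rfl
    | succ m ih =>
      intro hm ω
      rw [hXrec (m + 1) (by omega) hm ω]
      simp only [Nat.add_sub_cancel]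
      rw [ih (by omega) ω]
      rfl
  have hmeasX : ∀ m, m ≤ n → Measurable (X m) := by
    intro m hm
    have : X m = fun ω => cirF b σ T n x₀ m (fun j => q j ω) := funext (hrep m hm)
    rw [this]
    exact (cirF_measurable b σ T n x₀ m).comp (measurable_pi_lambda _ (fun j => hmeas j))
  have hind : ∀ k, k < n → IndepFun (q (k + 1)) (X k) μ := by
    intro k hk
    have h := cir_indep_aux μ b σ T x₀ n q hmeas hindep k hk
    have e : (fun ω => cirF b σ T n x₀ k (fun m => q m ω)) = X k :=
      funext fun ω => (hrep k (by omega) ω).symm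
    rwa [e] at h
  -- distributional facts about q j
  have hq_ae : ∀ j, 1 ≤ j → j ≤ n → ∀ᵐ ω ∂μ, q j ω = s ∨ q j ω = -s := by
    intro j h1 h2
    obtain ⟨hA, hB⟩ := hdist j h1 h2
    have hAm : MeasurableSet {ω | q j ω = s} := hmeas j (measurableSet_singleton s)
    have hBm : MeasurableSet {ω | q j ω = -s} := hmeas j (measurableSet_singleton (-s))
    have hdisjAB : Disjoint {ω | q j ω = s} {ω | q j ω = -s} := by
      rw [Set.disjoint_left]
      intro ω hω1 hω2
      have h1' : q j ω = s := hω1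
      have h2' : q j ω = -s := hω2
      have : s = -s := h1'.symm.trans h2'
      linarith
    have hunion : μ ({ω | q j ω = s} ∪ {ω | q j ω = -s}) = 1 := by
      rw [measure_union hdisjAB hBm, hA, hB, ENNReal.add_halves]
    have hcompl : μ ({ω | q j ω = s} ∪ {ω | q j ω = -s})ᶜ = 0 := by
      rw [measure_compl (hAm.union hBm) (measure_ne_top _ _), hunion, measure_univ, tsub_self]
    rw [ae_iff]
    have hset : {ω | ¬(q j ω = s ∨ q j ω = -s)}
        = ({ω | q j ω = s} ∪ {ω | q j ω = -s})ᶜ := by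
      ext ω
      simp [Set.mem_union, Set.mem_setOf_eq]
    rw [hset]
    exact hcompl
  have hq_int : ∀ j, 1 ≤ j → j ≤ n → Integrable (q j) μ := by
    intro j h1 h2
    apply Integrable.mono' (integrable_const s) (hmeas j).aestronglyMeasurable
    filter_upwards [hq_ae j h1 h2] with ω h
    rcases h with h | h <;> rw [Real.norm_eq_abs, h]
    · rw [abs_of_nonneg hs0.le]
    · rw [abs_neg, abs_of_nonneg hs0.le]
  have hq_zero : ∀ j, 1 ≤ j → j ≤ n → ∫ ω, q j ω ∂μ = 0 := by
    intro j h1 h2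
    obtain ⟨hA, hB⟩ := hdist j h1 h2
    have hAm : MeasurableSet {ω | q j ω = s} := hmeas j (measurableSet_singleton s)
    have hBm : MeasurableSet {ω | q j ω = -s} := hmeas j (measurableSet_singleton (-s))
    have heq : q j =ᵐ[μ] fun ω =>
        Set.indicator {ω | q j ω = s} (fun _ => s) ω
          + Set.indicator {ω | q j ω = -s} (fun _ => -s) ω := by
      filter_upwards [hq_ae j h1 h2] with ω h
      rcases h with h | h
      · have hA' : ω ∈ {ω | q j ω = s} := h
        have hB' : ω ∉ {ω | q j ω = -s} := by
          intro hmem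
          have hmem' : q j ω = -s := hmem
          have : s = -s := h.symm.trans hmem'
          linarith
        rw [Set.indicator_of_mem hA', Set.indicator_of_notMem hB', h, add_zero]
      · have hB' : ω ∈ {ω | q j ω = -s} := h
        have hA' : ω ∉ {ω | q j ω = s} := by
          intro hmem
          have hmem' : q j ω = s := hmem
          have : s = -s := hmem'.symm.trans h
          linarith
        rw [Set.indicator_of_notMem hA', Set.indicator_of_mem hB', h, zero_add]
    rw [integral_congr_ae heq,
      integral_add ((integrable_const s).indicator hAm) ((integrable_const (-s)).indicator hBm),
      integral_indicator_const s hAm, integral_indicator_const (-s) hBm, measureReal_def,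
      measureReal_def, hA, hB]
    simp only [smul_eq_mul]
    have h12 : ((1 : ENNReal) / 2).toReal = 1 / 2 := by
      rw [ENNReal.toReal_div]
      simp
    rw [h12]
    ring
  -- main induction
  have main : ∀ k, k ≤ n →
      (∃ M : ℝ, ∀ᵐ ω ∂μ, 0 < X k ω ∧ X k ω ≤ M) ∧
        (∫ ω, X k ω ∂μ) ≤ γ ∧ (∫ ω, (X k ω) ^ 2 ∂μ) ≤ γ ^ 2 := by
    intro k
    induction k with
    | zero =>
      intro _
      refine ⟨⟨x₀, Filter.Eventually.of_forall fun ω => by rw [hX0]; exact ⟨hx₀, le_rfl⟩⟩, ?_, ?_⟩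
      · simp only [hX0, integral_const, probReal_univ, ENNReal.toReal_one, one_smul]
        exact hγx
      · simp only [hX0, integral_const, probReal_univ, ENNReal.toReal_one, one_smul]
        exact pow_le_pow_left₀ hx₀.le hγx 2
    | succ k ih =>
      intro hk1
      obtain ⟨⟨M, hM⟩, hm, hv⟩ := ih (by omega)
      have hkn : k < n := by omega
      have hmeasXk : Measurable (X k) := hmeasX k (by omega)
      have hqae : ∀ᵐ ω ∂μ, q (k + 1) ω = s ∨ q (k + 1) ω = -s := hq_ae (k + 1) (by omega) hk1
      have hMM : 0 < M := by
        by_contra h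
        push_neg at h
        have : ∃ ω, 0 < X k ω ∧ X k ω ≤ M := by
          rcases hM.exists with ⟨ω, hω⟩
          exact ⟨ω, hω⟩
        obtain ⟨ω, h1', h2'⟩ := this
        linarith
      -- integrability facts
      have intX : Integrable (X k) μ := by
        apply Integrable.mono' (integrable_const M) hmeasXk.aestronglyMeasurable
        filter_upwards [hM] with ω h
        rw [Real.norm_eq_abs, abs_of_pos h.1]
        exact h.2
      have intX2 : Integrable (fun ω => (X k ω) ^ 2) μ := by
        apply Integrable.mono' (integrable_const (M ^ 2)) (hmeasXk.pow_const 2).aestronglyMeasurable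
        filter_upwards [hM] with ω h
        rw [Real.norm_eq_abs, abs_of_pos (pow_pos h.1 2)]
        exact pow_le_pow_left₀ h.1.le h.2 2
      have hmeasR : Measurable (fun ω => Real.sqrt (X k ω)) :=
        Real.continuous_sqrt.measurable.comp hmeasXk
      have hmeasD : Measurable (fun ω => X k ω + (b - X k ω) * T / (n : ℝ)) :=
        hmeasXk.add (((measurable_const.sub hmeasXk).mul_const T).div_const _)
      have hmeasDR : Measurable (fun ω =>
          (X k ω + (b - X k ω) * T / (n : ℝ)) * Real.sqrt (X k ω)) := hmeasD.mul hmeasR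
      have int_qR : Integrable (fun ω => q (k + 1) ω * Real.sqrt (X k ω)) μ := by
        apply Integrable.mono' (integrable_const (s * (1 + M)))
          ((hmeas (k + 1)).mul hmeasR).aestronglyMeasurable
        filter_upwards [hM, hqae] with ω h hq
        have h1 : Real.sqrt (X k ω) ≤ 1 + M := (hsqrt_le _ h.1.le).trans (by linarith [h.2])
        have h0 : 0 ≤ Real.sqrt (X k ω) := Real.sqrt_nonneg _
        simp only [Real.norm_eq_abs, Pi.mul_apply]
        rw [abs_mul]
        have habs : |q (k + 1) ω| = s := by
          rcases hq with hh | hh <;> rw [hh]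
          · exact abs_of_nonneg hs0.le
          · rw [abs_neg]; exact abs_of_nonneg hs0.le
        rw [habs, abs_of_nonneg h0]
        exact mul_le_mul_of_nonneg_left h1 hs0.le
      have int_qDR : Integrable (fun ω =>
          q (k + 1) ω * ((X k ω + (b - X k ω) * T / (n : ℝ)) * Real.sqrt (X k ω))) μ := by
        apply Integrable.mono' (integrable_const (s * ((M + b) * (1 + M))))
          ((hmeas (k + 1)).mul hmeasDR).aestronglyMeasurable
        filter_upwards [hM, hqae] with ω h hq
        have h1 : Real.sqrt (X k ω) ≤ 1 + M := (hsqrt_le _ h.1.le).trans (by linarith [h.2])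
        have h0 : 0 ≤ Real.sqrt (X k ω) := Real.sqrt_nonneg _
        have hD0 : 0 < X k ω + (b - X k ω) * T / (n : ℝ) := by
          rw [mul_div_assoc]
          linarith [mul_pos (show (0:ℝ) < 1 / 2 - T / (n : ℝ) by linarith) h.1,
            mul_pos hb hα, h.1]
        have hDle : X k ω + (b - X k ω) * T / (n : ℝ) ≤ M + b := by
          rw [mul_div_assoc]
          linarith [mul_pos hα h.1,
            mul_pos hb (show (0:ℝ) < 1 / 2 - T / (n : ℝ) by linarith), h.2, hb]
        simp only [Real.norm_eq_abs, Pi.mul_apply]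
        rw [abs_mul]
        have habs : |q (k + 1) ω| = s := by
          rcases hq with hh | hh <;> rw [hh]
          · exact abs_of_nonneg hs0.le
          · rw [abs_neg]; exact abs_of_nonneg hs0.le
        rw [habs, abs_mul, abs_of_pos hD0, abs_of_nonneg h0]
        have : (X k ω + (b - X k ω) * T / (n : ℝ)) * Real.sqrt (X k ω) ≤ (M + b) * (1 + M) :=
          mul_le_mul hDle h1 h0 (by nlinarith)
        exact mul_le_mul_of_nonneg_left this hs0.le
      have int_q : Integrable (q (k + 1)) μ := hq_int (k + 1) (by omega) hk1
      -- independence and cross terms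
      have hindk := hind k hkn
      have hq0 : ∫ ω, q (k + 1) ω ∂μ = 0 := hq_zero (k + 1) (by omega) hk1
      have hindR : IndepFun (q (k + 1)) (fun ω => Real.sqrt (X k ω)) μ :=
        hindk.comp measurable_id Real.continuous_sqrt.measurable
      have hindDR : IndepFun (q (k + 1)) (fun ω =>
          (X k ω + (b - X k ω) * T / (n : ℝ)) * Real.sqrt (X k ω)) μ := by
        have hψ : Measurable (fun x : ℝ => (x + (b - x) * T / (n : ℝ)) * Real.sqrt x) :=
          (measurable_id.add (((measurable_const.sub measurable_id).mul_const T).div_const _)).mul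
            Real.continuous_sqrt.measurable
        exact hindk.comp measurable_id hψ
      have intR : Integrable (fun ω => Real.sqrt (X k ω)) μ := by
        apply Integrable.mono' (integrable_const (1 + M)) hmeasR.aestronglyMeasurable
        filter_upwards [hM] with ω h
        rw [Real.norm_eq_abs, abs_of_nonneg (Real.sqrt_nonneg _)]
        exact (hsqrt_le _ h.1.le).trans (by linarith [h.2])
      have intDR : Integrable (fun ω =>
          (X k ω + (b - X k ω) * T / (n : ℝ)) * Real.sqrt (X k ω)) μ := by
        apply Integrable.mono' (integrable_const ((M + b) * (1 + M)))
          hmeasDR.aestronglyMeasurable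
        filter_upwards [hM] with ω h
        have h1 : Real.sqrt (X k ω) ≤ 1 + M := (hsqrt_le _ h.1.le).trans (by linarith [h.2])
        have h0 : 0 ≤ Real.sqrt (X k ω) := Real.sqrt_nonneg _
        have hD0 : 0 < X k ω + (b - X k ω) * T / (n : ℝ) := by
          rw [mul_div_assoc]
          linarith [mul_pos (show (0:ℝ) < 1 / 2 - T / (n : ℝ) by linarith) h.1,
            mul_pos hb hα, h.1]
        have hDle : X k ω + (b - X k ω) * T / (n : ℝ) ≤ M + b := by
          rw [mul_div_assoc]
          linarith [mul_pos hα h.1,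
            mul_pos hb (show (0:ℝ) < 1 / 2 - T / (n : ℝ) by linarith), h.2, hb]
        rw [Real.norm_eq_abs, abs_mul, abs_of_pos hD0, abs_of_nonneg h0]
        exact mul_le_mul hDle h1 h0 (by nlinarith)
      have hcrossR : ∫ ω, q (k + 1) ω * Real.sqrt (X k ω) ∂μ = 0 := by
        have h := hindR.integral_fun_mul_eq_mul_integral int_q.aestronglyMeasurable intR.aestronglyMeasurable
        calc ∫ ω, q (k + 1) ω * Real.sqrt (X k ω) ∂μ
            = (∫ ω, q (k + 1) ω ∂μ) * ∫ ω, Real.sqrt (X k ω) ∂μ := h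
          _ = 0 := by rw [hq0]; ring
      have hcross : ∫ ω, q (k + 1) ω *
          ((X k ω + (b - X k ω) * T / (n : ℝ)) * Real.sqrt (X k ω)) ∂μ = 0 := by
        have h := hindDR.integral_fun_mul_eq_mul_integral int_q.aestronglyMeasurable
          intDR.aestronglyMeasurable
        calc ∫ ω, q (k + 1) ω *
              ((X k ω + (b - X k ω) * T / (n : ℝ)) * Real.sqrt (X k ω)) ∂μ
            = (∫ ω, q (k + 1) ω ∂μ) *
              ∫ ω, (X k ω + (b - X k ω) * T / (n : ℝ)) * Real.sqrt (X k ω) ∂μ := h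
          _ = 0 := by rw [hq0]; ring
      -- a.e. bound for step k+1
      have hbnd' : ∀ᵐ ω ∂μ, 0 < X (k + 1) ω ∧ X (k + 1) ω ≤ M + b + σ * s * (1 + M) := by
        filter_upwards [hM, hqae] with ω hXω hqω
        rw [hXrec (k + 1) (by omega) hk1 ω]
        simp only [Nat.add_sub_cancel]
        exact key M (X k ω) (q (k + 1) ω) hXω.1 hXω.2 hqω
      -- first moment
      have hmean : ∫ ω, X (k + 1) ω ∂μ
          = (1 - T / (n : ℝ)) * (∫ ω, X k ω ∂μ) + b * (T / (n : ℝ)) := by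
        have hXeq : ∀ ω, X (k + 1) ω
            = ((1 - T / (n : ℝ)) * X k ω + b * (T / (n : ℝ)))
              + σ * (q (k + 1) ω * Real.sqrt (X k ω)) := by
          intro ω
          rw [hXrec (k + 1) (by omega) hk1 ω]
          simp only [Nat.add_sub_cancel]
          ring
        have I1 : Integrable (fun ω => (1 - T / (n : ℝ)) * X k ω) μ := intX.const_mul _
        have I2 : Integrable (fun _ : Ω => b * (T / (n : ℝ))) μ := integrable_const _
        have I12 : Integrable (fun ω => (1 - T / (n : ℝ)) * X k ω + b * (T / (n : ℝ))) μ :=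
          I1.add I2
        have I3 : Integrable (fun ω => σ * (q (k + 1) ω * Real.sqrt (X k ω))) μ :=
          int_qR.const_mul σ
        simp only [hXeq]
        rw [integral_add I12 I3, integral_add I1 I2, integral_const_mul (1 - T / (n : ℝ)),
          integral_const_mul σ, hcrossR, integral_const]
        simp [measure_univ]
      -- second moment identity
      have h2eq : ∀ᵐ ω ∂μ, (X (k + 1) ω) ^ 2
          = ((1 - T / (n : ℝ)) ^ 2 * (X k ω) ^ 2
              + (2 * b * (T / (n : ℝ)) * (1 - T / (n : ℝ))) * X k ω
              + (b * (T / (n : ℝ))) ^ 2)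
            + (2 * σ) * (q (k + 1) ω * ((X k ω + (b - X k ω) * T / (n : ℝ)) * Real.sqrt (X k ω)))
            + (σ ^ 2 * (T / (n : ℝ))) * X k ω := by
        filter_upwards [hM, hqae] with ω hXω hqω
        rw [hXrec (k + 1) (by omega) hk1 ω]
        simp only [Nat.add_sub_cancel]
        have hsq : Real.sqrt (X k ω) ^ 2 = X k ω := Real.sq_sqrt hXω.1.le
        have hq2 : (q (k + 1) ω) ^ 2 = T / (n : ℝ) := by
          rcases hqω with h | h <;> rw [h]
          · exact hs2
          · rw [neg_pow, ← hs2]; ring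
        have expand : (X k ω + (b - X k ω) * T / (n : ℝ)
              + σ * q (k + 1) ω * Real.sqrt (X k ω)) ^ 2
            = (X k ω + (b - X k ω) * T / (n : ℝ)) ^ 2
              + (2 * σ) * (q (k + 1) ω
                  * ((X k ω + (b - X k ω) * T / (n : ℝ)) * Real.sqrt (X k ω)))
              + σ ^ 2 * ((q (k + 1) ω) ^ 2 * (Real.sqrt (X k ω)) ^ 2) := by ring
        rw [expand, hq2, hsq]
        ring
      have hvar : ∫ ω, (X (k + 1) ω) ^ 2 ∂μ
          = (1 - T / (n : ℝ)) ^ 2 * (∫ ω, (X k ω) ^ 2 ∂μ)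
            + (2 * b * (T / (n : ℝ)) * (1 - T / (n : ℝ))) * (∫ ω, X k ω ∂μ)
            + (b * (T / (n : ℝ))) ^ 2
            + (σ ^ 2 * (T / (n : ℝ))) * (∫ ω, X k ω ∂μ) := by
        have J1 : Integrable (fun ω => (1 - T / (n : ℝ)) ^ 2 * (X k ω) ^ 2) μ :=
          intX2.const_mul _
        have J2 : Integrable (fun ω => (2 * b * (T / (n : ℝ)) * (1 - T / (n : ℝ))) * X k ω) μ :=
          intX.const_mul _
        have J3 : Integrable (fun _ : Ω => (b * (T / (n : ℝ))) ^ 2) μ := integrable_const _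
        have J4 : Integrable (fun ω => (2 * σ) * (q (k + 1) ω
            * ((X k ω + (b - X k ω) * T / (n : ℝ)) * Real.sqrt (X k ω)))) μ :=
          int_qDR.const_mul _
        have J5 : Integrable (fun ω => (σ ^ 2 * (T / (n : ℝ))) * X k ω) μ := intX.const_mul _
        have J12 : Integrable (fun ω => (1 - T / (n : ℝ)) ^ 2 * (X k ω) ^ 2
            + (2 * b * (T / (n : ℝ)) * (1 - T / (n : ℝ))) * X k ω) μ := J1.add J2
        have J123 : Integrable (fun ω => (1 - T / (n : ℝ)) ^ 2 * (X k ω) ^ 2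
            + (2 * b * (T / (n : ℝ)) * (1 - T / (n : ℝ))) * X k ω
            + (b * (T / (n : ℝ))) ^ 2) μ := J12.add J3
        have J1234 : Integrable (fun ω => ((1 - T / (n : ℝ)) ^ 2 * (X k ω) ^ 2
            + (2 * b * (T / (n : ℝ)) * (1 - T / (n : ℝ))) * X k ω
            + (b * (T / (n : ℝ))) ^ 2)
            + (2 * σ) * (q (k + 1) ω
              * ((X k ω + (b - X k ω) * T / (n : ℝ)) * Real.sqrt (X k ω)))) μ := J123.add J4
        rw [integral_congr_ae h2eq]
        rw [integral_add J1234 J5, integral_add J123 J4, integral_add J12 J3,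
          integral_add J1 J2, integral_const_mul ((1 - T / (n : ℝ)) ^ 2),
          integral_const_mul (2 * b * (T / (n : ℝ)) * (1 - T / (n : ℝ))),
          integral_const_mul (2 * σ), integral_const_mul (σ ^ 2 * (T / (n : ℝ))),
          hcross, integral_const]
        simp [measure_univ]
      refine ⟨⟨M + b + σ * s * (1 + M), hbnd'⟩, ?_, ?_⟩
      · rw [hmean]
        nlinarith [hm, hbγ, hα, hα2]
      · rw [hvar]
        have h1 : (1 - T / (n : ℝ)) ^ 2 * (∫ ω, (X k ω) ^ 2 ∂μ)
            ≤ (1 - T / (n : ℝ)) ^ 2 * γ ^ 2 :=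
          mul_le_mul_of_nonneg_left hv (sq_nonneg _)
        have h2 : (2 * b * (T / (n : ℝ)) * (1 - T / (n : ℝ))) * (∫ ω, X k ω ∂μ)
            ≤ (2 * b * (T / (n : ℝ)) * (1 - T / (n : ℝ))) * γ := by
          apply mul_le_mul_of_nonneg_left hm
          have : (0:ℝ) < 1 - T / (n : ℝ) := by linarith
          positivity
        have h3 : (σ ^ 2 * (T / (n : ℝ))) * (∫ ω, X k ω ∂μ) ≤ (σ ^ 2 * (T / (n : ℝ))) * γ := by
          apply mul_le_mul_of_nonneg_left hm
          positivity
        have e1 : 0 ≤ (T / (n : ℝ)) * (1 / 2 - T / (n : ℝ)) * (γ - b) ^ 2 :=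
          mul_nonneg (mul_nonneg hα.le (by linarith)) (sq_nonneg _)
        have e2 : 0 ≤ (T / (n : ℝ)) * (3 * γ ^ 2 - 2 * (b + σ ^ 2) * γ - b ^ 2) :=
          mul_nonneg hα.le key3
        nlinarith [h1, h2, h3, e1, e2]
  intro k hk
  exact ⟨(main k hk).2.2, (main k hk).2.1⟩
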